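/- arXiv:1606.03984 — 6 statements merged into one kernel-verified Lean document; each statement's English description precedes it below -/
import Mathlib

section
/- Let N = {i₁,…,iₙ} be a finite set of indices and X a team on N. For every team Y on N, Y ⊨ Θ_X if and only if Y ⊆ X. -/
/-- Formulas of full propositional team logic (FPT), with propositional
variables indexed by a type `V`. -/
inductive PTForm (V : Type) : Type where
  | pos : V → PTForm V
  | neg : V → PTForm V
  | bot : PTForm V
  | ne : PTForm V
  | dep : List V → V → PTForm V
  | indep : List V → List V → PTForm V
  | incl : List V → List V → PTForm V
  | and : PTForm V → PTForm V → PTForm V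
  | tensor : PTForm V → PTForm V → PTForm V
  | nsor : PTForm V → PTForm V → PTForm V
  | bor : PTForm V → PTForm V → PTForm V

/-- Team semantics of full propositional team logic.  A valuation is a
function `V → Bool` and a team is a set of valuations. -/
def PTSat {V : Type} (X : Set (V → Bool)) : PTForm V → Prop
  | .pos i => ∀ s ∈ X, s i = true
  | .neg i => ∀ s ∈ X, s i = false
  | .bot => X = ∅
  | .ne => X ≠ ∅
  | .dep xs y => ∀ s ∈ X, ∀ s' ∈ X, (∀ i ∈ xs, s i = s' i) → s y = s' y
  | .indep xs ys =>
      ∀ s ∈ X, ∀ s' ∈ X, ∃ s'' ∈ X,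
        (∀ i ∈ xs, s'' i = s i) ∧ (∀ j ∈ ys, s'' j = s' j)
  | .incl xs ys => ∀ s ∈ X, ∃ s' ∈ X, ∀ p ∈ List.zip xs ys, s p.1 = s' p.2
  | .and φ ψ => PTSat X φ ∧ PTSat X ψ
  | .tensor φ ψ => ∃ Y Z, X = Y ∪ Z ∧ PTSat Y φ ∧ PTSat Z ψ
  | .nsor φ ψ =>
      X = ∅ ∨ ∃ Y Z, X = Y ∪ Z ∧ Y.Nonempty ∧ Z.Nonempty ∧ PTSat Y φ ∧ PTSat Z ψ
  | .bor φ ψ => PTSat X φ ∨ PTSat X ψ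

/-- The set of propositional variables occurring in a formula. -/
def PTForm.vars {V : Type} : PTForm V → Set V
  | .pos i => {i}
  | .neg i => {i}
  | .bot => ∅
  | .ne => ∅
  | .dep xs y => {i | i ∈ xs} ∪ {y}
  | .indep xs ys => {i | i ∈ xs} ∪ {j | j ∈ ys}
  | .incl xs ys => {i | i ∈ xs} ∪ {j | j ∈ ys}
  | .and φ ψ => φ.vars ∪ ψ.vars
  | .tensor φ ψ => φ.vars ∪ ψ.vars
  | .nsor φ ψ => φ.vars ∪ ψ.vars
  | .bor φ ψ => φ.vars ∪ ψ.vars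

/-- The formula does not contain the atom NE. -/
def PTForm.NEfree {V : Type} : PTForm V → Prop
  | .ne => False
  | .and φ ψ => φ.NEfree ∧ ψ.NEfree
  | .tensor φ ψ => φ.NEfree ∧ ψ.NEfree
  | .nsor φ ψ => φ.NEfree ∧ ψ.NEfree
  | .bor φ ψ => φ.NEfree ∧ ψ.NEfree
  | _ => True

/-- Classical formulas: built from `pᵢ`, `¬pᵢ`, `⊥` using only `∧` and `⊗`. -/
inductive IsClassical {V : Type} : PTForm V → Prop where
  | pos (i : V) : IsClassical (.pos i)
  | neg (i : V) : IsClassical (.neg i)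
  | bot : IsClassical .bot
  | and : ∀ {φ ψ}, IsClassical φ → IsClassical ψ → IsClassical (.and φ ψ)
  | tensor : ∀ {φ ψ}, IsClassical φ → IsClassical ψ → IsClassical (.tensor φ ψ)

/-- The language of strong propositional team logic PT⁺:
atoms `pᵢ`, `¬pᵢ`, `⊥`, `NE` and connectives `∧`, `⊗`, `∨`. -/
inductive IsPTPlus {V : Type} : PTForm V → Prop where
  | pos (i : V) : IsPTPlus (.pos i)
  | neg (i : V) : IsPTPlus (.neg i)
  | bot : IsPTPlus .bot
  | ne : IsPTPlus .ne
  | and : ∀ {φ ψ}, IsPTPlus φ → IsPTPlus ψ → IsPTPlus (.and φ ψ)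
  | tensor : ∀ {φ ψ}, IsPTPlus φ → IsPTPlus ψ → IsPTPlus (.tensor φ ψ)
  | bor : ∀ {φ ψ}, IsPTPlus φ → IsPTPlus ψ → IsPTPlus (.bor φ ψ)

/-- The language of propositional team logic PT:
atoms `pᵢ`, `¬pᵢ`, `⊥` and connectives `∧`, `⊛`, `∨`. -/
inductive IsPT {V : Type} : PTForm V → Prop where
  | pos (i : V) : IsPT (.pos i)
  | neg (i : V) : IsPT (.neg i)
  | bot : IsPT .bot
  | and : ∀ {φ ψ}, IsPT φ → IsPT ψ → IsPT (.and φ ψ)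
  | nsor : ∀ {φ ψ}, IsPT φ → IsPT ψ → IsPT (.nsor φ ψ)
  | bor : ∀ {φ ψ}, IsPT φ → IsPT ψ → IsPT (.bor φ ψ)

/-- The language of propositional union closed logic PU:
atoms `pᵢ`, `¬pᵢ`, `⊥` and connectives `∧`, `⊗`, `⊛`. -/
inductive IsPU {V : Type} : PTForm V → Prop where
  | pos (i : V) : IsPU (.pos i)
  | neg (i : V) : IsPU (.neg i)
  | bot : IsPU .bot
  | and : ∀ {φ ψ}, IsPU φ → IsPU ψ → IsPU (.and φ ψ)
  | tensor : ∀ {φ ψ}, IsPU φ → IsPU ψ → IsPU (.tensor φ ψ)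
  | nsor : ∀ {φ ψ}, IsPU φ → IsPU ψ → IsPU (.nsor φ ψ)

/-- The language of strong propositional union closed logic PU⁺:
atoms `pᵢ`, `¬pᵢ`, `⊥`, `NE` and connectives `∧`, `⊗`, `⊛`. -/
inductive IsPUPlus {V : Type} : PTForm V → Prop where
  | pos (i : V) : IsPUPlus (.pos i)
  | neg (i : V) : IsPUPlus (.neg i)
  | bot : IsPUPlus .bot
  | ne : IsPUPlus .ne
  | and : ∀ {φ ψ}, IsPUPlus φ → IsPUPlus ψ → IsPUPlus (.and φ ψ)
  | tensor : ∀ {φ ψ}, IsPUPlus φ → IsPUPlus ψ → IsPUPlus (.tensor φ ψ)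
  | nsor : ∀ {φ ψ}, IsPUPlus φ → IsPUPlus ψ → IsPUPlus (.nsor φ ψ)

/-- The atom-free team language: atoms `pᵢ`, `¬pᵢ`, `⊥`, `NE` and
connectives `∧`, `⊗`, `⊛`, `∨` (no dependence/independence/inclusion atoms). -/
inductive IsAtomFree {V : Type} : PTForm V → Prop where
  | pos (i : V) : IsAtomFree (.pos i)
  | neg (i : V) : IsAtomFree (.neg i)
  | bot : IsAtomFree .bot
  | ne : IsAtomFree .ne
  | and : ∀ {φ ψ}, IsAtomFree φ → IsAtomFree ψ → IsAtomFree (.and φ ψ)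
  | tensor : ∀ {φ ψ}, IsAtomFree φ → IsAtomFree ψ → IsAtomFree (.tensor φ ψ)
  | nsor : ∀ {φ ψ}, IsAtomFree φ → IsAtomFree ψ → IsAtomFree (.nsor φ ψ)
  | bor : ∀ {φ ψ}, IsAtomFree φ → IsAtomFree ψ → IsAtomFree (.bor φ ψ)

/-- The literal `pᵢ^{s(i)}`, i.e. `pᵢ` if `s i = 1` and `¬pᵢ` if `s i = 0`. -/
def PTlit {V : Type} (s : V → Bool) (i : V) : PTForm V :=
  if s i then .pos i else .neg i

/-- Conjunction of a nonempty list headed by the first argument. -/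
def PTandAux {V : Type} : PTForm V → List (PTForm V) → PTForm V
  | φ, [] => φ
  | φ, ψ :: l => .and φ (PTandAux ψ l)

/-- Conjunction of a list of formulas (only used on nonempty lists). -/
def PTandList {V : Type} : List (PTForm V) → PTForm V
  | [] => .bot
  | φ :: l => PTandAux φ l

/-- The formula `p_{i₁}^{s(i₁)} ∧ … ∧ p_{iₙ}^{s(iₙ)}` describing the
valuation `s`, where `{i₁, …, iₙ}` enumerates all of `V`. -/
noncomputable def PTdescr {V : Type} [Fintype V] (s : V → Bool) : PTForm V :=
  PTandList ((Finset.univ : Finset V).toList.map (PTlit s))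

/-- Tensor disjunction `⊗` of a list of formulas; the empty tensor
disjunction is `⊥`. -/
def PTtensorList {V : Type} (l : List (PTForm V)) : PTForm V :=
  l.foldr PTForm.tensor PTForm.bot

/-- Nonempty disjunction `⊛` of a nonempty list headed by the first argument. -/
def PTnsorAux {V : Type} : PTForm V → List (PTForm V) → PTForm V
  | φ, [] => φ
  | φ, ψ :: l => .nsor φ (PTnsorAux ψ l)

/-- Nonempty disjunction `⊛` of a list of formulas; the empty nonempty
disjunction is `⊥`. -/
def PTnsorList {V : Type} : List (PTForm V) → PTForm V
  | [] => .bot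
  | φ :: l => PTnsorAux φ l

/-- Boolean disjunction `∨` of a list of formulas; the empty Boolean
disjunction is `⊥ ∧ NE`. -/
def PTborList {V : Type} (l : List (PTForm V)) : PTForm V :=
  l.foldr PTForm.bor (PTForm.and PTForm.bot PTForm.ne)

/-- The formula `Θ_X := ⊗_{s∈X} (p_{i₁}^{s(i₁)} ∧ … ∧ p_{iₙ}^{s(iₙ)})`. -/
noncomputable def PTtheta {V : Type} [Fintype V] (X : Finset (V → Bool)) : PTForm V :=
  PTtensorList (X.toList.map PTdescr)

/-- The formula `Θ*_X := ⊗_{s∈X} (p_{i₁}^{s(i₁)} ∧ … ∧ p_{iₙ}^{s(iₙ)} ∧ NE)`. -/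
noncomputable def PTthetaStar {V : Type} [Fintype V] (X : Finset (V → Bool)) : PTForm V :=
  PTtensorList (X.toList.map (fun s => .and (PTdescr s) .ne))

/-- The formula `Θ**_X := ⊛_{s∈X} (p_{i₁}^{s(i₁)} ∧ … ∧ p_{iₙ}^{s(iₙ)})`. -/
noncomputable def PTthetaSS {V : Type} [Fintype V] (X : Finset (V → Bool)) : PTForm V :=
  PTnsorList (X.toList.map PTdescr)

/-- Logical consequence: every team satisfying all formulas of `Γ`
satisfies `φ`. -/
def PTEntails {V : Type} (Γ : Set (PTForm V)) (φ : PTForm V) : Prop :=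
  ∀ X : Set (V → Bool), (∀ ψ ∈ Γ, PTSat X ψ) → PTSat X φ

/-- A team property is flat if a team is in it iff all its singleton
subteams are. -/
def IsFlat {V : Type} (P : Set (Set (V → Bool))) : Prop :=
  ∀ X : Set (V → Bool), X ∈ P ↔ ∀ s ∈ X, ({s} : Set (V → Bool)) ∈ P

/-- A team property is union closed if it is closed under unions of
nonempty subfamilies. -/
def IsUnionClosed {V : Type} (P : Set (Set (V → Bool))) : Prop :=
  ∀ 𝒳 ⊆ P, 𝒳.Nonempty → ⋃₀ 𝒳 ∈ P

/-- The syntactic De Morgan negation of a classical formula. -/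
def PTdeMorgan : PTForm ℕ → PTForm ℕ
  | .pos i => .neg i
  | .neg i => .pos i
  | .bot => .tensor (.pos 0) (.neg 0)
  | .and φ ψ => .tensor (PTdeMorgan φ) (PTdeMorgan ψ)
  | .tensor φ ψ => .and (PTdeMorgan φ) (PTdeMorgan ψ)
  | φ => φ

/-- Application of a substitution `σ` (assigning a formula to each
propositional variable) to a formula of the atom-free team language. -/
def PTsubst (σ : ℕ → PTForm ℕ) : PTForm ℕ → PTForm ℕ
  | .pos i => σ i
  | .neg i => PTdeMorgan (σ i)
  | .and φ ψ => .and (PTsubst σ φ) (PTsubst σ ψ)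
  | .tensor φ ψ => .tensor (PTsubst σ φ) (PTsubst σ ψ)
  | .nsor φ ψ => .nsor (PTsubst σ φ) (PTsubst σ ψ)
  | .bor φ ψ => .bor (PTsubst σ φ) (PTsubst σ ψ)
  | φ => φ

lemma PTSat_andAux {V : Type} (Y : Set (V → Bool)) (φ : PTForm V) (l : List (PTForm V)) :
    PTSat Y (PTandAux φ l) ↔ PTSat Y φ ∧ ∀ ψ ∈ l, PTSat Y ψ := by
  induction l generalizing φ with
  | nil => simp [PTandAux]
  | cons ψ l ih =>
    simp only [PTandAux, PTSat, ih, List.mem_cons]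
    constructor
    · rintro ⟨h1, h2, h3⟩
      exact ⟨h1, fun χ hχ => hχ.elim (fun h => h ▸ h2) (h3 χ)⟩
    · rintro ⟨h1, h2⟩
      exact ⟨h1, h2 ψ (Or.inl rfl), fun χ hχ => h2 χ (Or.inr hχ)⟩

lemma PTSat_descr {V : Type} [Fintype V] [Nonempty V] (Y : Set (V → Bool))
    (s : V → Bool) : PTSat Y (PTdescr s) ↔ Y ⊆ {s} := by
  have hmem : ∀ i : V, i ∈ (Finset.univ : Finset V).toList := by
    intro i; simp
  have hne : (Finset.univ : Finset V).toList ≠ [] := by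
    intro h
    exact (List.not_mem_nil (a := Classical.arbitrary V)) (h ▸ hmem _)
  unfold PTdescr
  rcases hl : (Finset.univ : Finset V).toList with _ | ⟨i, l⟩
  · exact absurd hl hne
  · simp only [List.map_cons, PTandList, PTSat_andAux]
    have hlit : ∀ (j : V), PTSat Y (PTlit s j) ↔ ∀ t ∈ Y, t j = s j := by
      intro j
      unfold PTlit
      cases h : s j <;> simp [PTSat, h]
    constructor
    · rintro ⟨h1, h2⟩ t ht
      have : ∀ j : V, t j = s j := by
        intro j
        have hj := hmem j
        rw [hl] at hj
        rcases List.mem_cons.mp hj with h | h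
        · exact (hlit j).mp (h ▸ h1) t ht
        · exact (hlit j).mp (h2 _ (List.mem_map_of_mem h)) t ht
      exact funext this
    · intro h
      refine ⟨(hlit i).mpr fun t ht => by rw [h ht], ?_⟩
      intro ψ hψ
      rcases List.mem_map.mp hψ with ⟨j, _, rfl⟩
      exact (hlit j).mpr fun t ht => by rw [h ht]

lemma PTSat_tensorList_descr {V : Type} [Fintype V] [Nonempty V]
    (Y : Set (V → Bool)) (l : List (V → Bool)) :
    PTSat Y (PTtensorList (l.map PTdescr)) ↔ Y ⊆ {s | s ∈ l} := by
  induction l generalizing Y with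
  | nil =>
    simp only [List.map_nil, PTtensorList, List.foldr_nil, PTSat]
    constructor
    · rintro rfl; simp
    · intro h; ext t; simpa using fun ht => h ht
  | cons s l ih =>
    simp only [List.map_cons, PTtensorList, List.foldr_cons]
    constructor
    · rintro ⟨A, B, rfl, hA, hB⟩ t ht
      rcases ht with ht | ht
      · exact List.mem_cons.mpr (Or.inl ((PTSat_descr A s).mp hA ht))
      · exact List.mem_cons.mpr (Or.inr ((ih B).mp hB ht))
    · intro h
      refine ⟨Y ∩ {s}, Y ∩ {t | t ∈ l}, ?_, ?_, ?_⟩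
      · ext t
        constructor
        · intro ht
          rcases List.mem_cons.mp (h ht) with h' | h'
          · exact Or.inl ⟨ht, h'⟩
          · exact Or.inr ⟨ht, h'⟩
        · rintro (⟨ht, _⟩ | ⟨ht, _⟩) <;> exact ht
      · exact (PTSat_descr _ s).mpr fun t ht => ht.2
      · exact (ih _).mpr fun t ht => ht.2

open Classical in
/-- The valuation `s_σ`, with `s_σ(i) = 1` iff `{s} ⊨ σ(pᵢ)`. -/
noncomputable def PTvalSubst (σ : ℕ → PTForm ℕ) (s : ℕ → Bool) : ℕ → Bool :=
  fun i => if PTSat {s} (σ i) then true else false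
/-- For a team `X` on a finite (nonempty) index set, a team `Y` satisfies
`Θ_X` if and only if `Y ⊆ X`. -/
theorem theta_characterizes_subteams (V : Type) [Fintype V] [Nonempty V]
    (X : Finset (V → Bool)) (Y : Set (V → Bool)) :
    PTSat Y (PTtheta X) ↔ Y ⊆ ↑X := by
  unfold PTtheta
  rw [PTSat_tensorList_descr]
  constructor
  · intro h t ht
    simpa using (show t ∈ {s | s ∈ X.toList} from h ht)
  · intro h t ht
    simpa using h ht
end

section
/- Classical propositional logic characterizes under team semantics the set of all flat team properties: for every finite index set N = {i₁,…,iₙ}, (a) for every classical formula φ whose variables are among {p_i : i∈N}, the set ⟦φ⟧ = {Y ⊆ 2^N : Y ⊨ φ} is a flat team property on N; and (b) for every flat team property P ⊆ 𝒫(2^N) there is a classical formula φ whose variables are among {p_i : i∈N} such that ⟦φ⟧ = P. -/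

lemma PT_empty_sat {V : Type} {φ : PTForm V} (h : IsClassical φ) :
    PTSat (∅ : Set (V → Bool)) φ := by
  induction h with
  | pos i => intro s hs; exact absurd hs (Set.notMem_empty s)
  | neg i => intro s hs; exact absurd hs (Set.notMem_empty s)
  | bot => rfl
  | and h1 h2 ih1 ih2 => exact ⟨ih1, ih2⟩
  | tensor h1 h2 ih1 ih2 => exact ⟨∅, ∅, by simp, ih1, ih2⟩

lemma PT_classical_flat {V : Type} {φ : PTForm V} (h : IsClassical φ) :
    ∀ X : Set (V → Bool), PTSat X φ ↔ ∀ s ∈ X, PTSat ({s} : Set (V → Bool)) φ := by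
  induction h with
  | pos i => intro X; simp [PTSat]
  | neg i => intro X; simp [PTSat]
  | bot =>
    intro X
    constructor
    · rintro rfl s hs; exact absurd hs (Set.notMem_empty s)
    · intro h
      ext s
      simp only [Set.mem_empty_iff_false, iff_false]
      intro hs
      have : ({s} : Set (V → Bool)) = ∅ := h s hs
      exact absurd (Set.mem_singleton s) (this ▸ Set.notMem_empty s)
  | and h1 h2 ih1 ih2 =>
    intro X
    constructor
    · rintro ⟨hφ, hψ⟩ s hs
      exact ⟨(ih1 X).1 hφ s hs, (ih2 X).1 hψ s hs⟩
    · intro h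
      exact ⟨(ih1 X).2 fun s hs => (h s hs).1, (ih2 X).2 fun s hs => (h s hs).2⟩
  | @tensor φ ψ h1 h2 ih1 ih2 =>
    intro X
    constructor
    · rintro ⟨Y, Z, rfl, hY, hZ⟩ s hs
      rcases hs with hs | hs
      · exact ⟨{s}, ∅, by simp, (ih1 Y).1 hY s hs, PT_empty_sat h2⟩
      · exact ⟨∅, {s}, by simp, PT_empty_sat h1, (ih2 Z).1 hZ s hs⟩
    · intro h
      refine ⟨{s ∈ X | PTSat ({s} : Set (V → Bool)) φ},
              {s ∈ X | PTSat ({s} : Set (V → Bool)) ψ}, ?_, ?_, ?_⟩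
      · ext s
        simp only [Set.mem_union, Set.mem_setOf_eq]
        constructor
        · intro hs
          obtain ⟨A, B, hAB, hA, hB⟩ := h s hs
          have hsAB : s ∈ A ∪ B := hAB ▸ Set.mem_singleton s
          rcases hsAB with hsA | hsB
          · left
            refine ⟨hs, ?_⟩
            have : A = {s} := by
              apply Set.Subset.antisymm
              · intro t ht
                have : t ∈ A ∪ B := Or.inl ht
                rw [← hAB] at this; exact this
              · intro t ht; cases ht; exact hsA
            exact this ▸ hA
          · right
            refine ⟨hs, ?_⟩
            have : B = {s} := by
              apply Set.Subset.antisymm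
              · intro t ht
                have : t ∈ A ∪ B := Or.inr ht
                rw [← hAB] at this; exact this
              · intro t ht; cases ht; exact hsB
            exact this ▸ hB
        · rintro (⟨hs, _⟩ | ⟨hs, _⟩) <;> exact hs
      · exact (ih1 _).2 fun s hs => hs.2
      · exact (ih2 _).2 fun s hs => hs.2

lemma PT_sat_lit {V : Type} (s : V → Bool) (i : V) (X : Set (V → Bool)) :
    PTSat X (PTlit s i) ↔ ∀ t ∈ X, t i = s i := by
  unfold PTlit
  cases h : s i <;> simp [PTSat, h]

lemma PT_sat_andAux {V : Type} (φ : PTForm V) (l : List (PTForm V)) (X : Set (V → Bool)) :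
    PTSat X (PTandAux φ l) ↔ PTSat X φ ∧ ∀ ψ ∈ l, PTSat X ψ := by
  induction l generalizing φ with
  | nil => simp [PTandAux]
  | cons ψ l ih =>
    show PTSat X φ ∧ PTSat X (PTandAux ψ l) ↔ _
    rw [ih]
    simp [and_assoc]

lemma PT_sat_descr {V : Type} [Fintype V] [Nonempty V] (s : V → Bool) (X : Set (V → Bool)) :
    PTSat X (PTdescr s) ↔ ∀ t ∈ X, t = s := by
  unfold PTdescr
  have hne : (Finset.univ : Finset V).toList ≠ [] := by
    rw [Ne, Finset.toList_eq_nil]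
    exact (Finset.univ_nonempty (α := V)).ne_empty
  have key : ∀ l : List V, l ≠ [] →
      (PTSat X (PTandList (l.map (PTlit s))) ↔ ∀ i ∈ l, ∀ t ∈ X, t i = s i) := by
    intro l hl
    cases l with
    | nil => exact absurd rfl hl
    | cons i l =>
      show PTSat X (PTandAux (PTlit s i) (l.map (PTlit s))) ↔ _
      rw [PT_sat_andAux, PT_sat_lit]
      constructor
      · rintro ⟨h1, h2⟩ j hj
        rcases List.mem_cons.1 hj with rfl | hj
        · exact h1
        · have := h2 (PTlit s j) (List.mem_map_of_mem hj)
          rw [PT_sat_lit] at this; exact this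
      · intro h
        refine ⟨h i List.mem_cons_self, ?_⟩
        intro ψ hψ
        obtain ⟨j, hj, rfl⟩ := List.mem_map.1 hψ
        rw [PT_sat_lit]
        exact h j (List.mem_cons_of_mem _ hj)
  rw [key _ hne]
  constructor
  · intro h t ht
    funext i
    exact h i (by simp [Finset.mem_toList]) t ht
  · intro h i _ t ht
    rw [h t ht]

lemma PT_sat_tensorList {V : Type} [Fintype V] [Nonempty V] (L : List (V → Bool))
    (X : Set (V → Bool)) :
    PTSat X (PTtensorList (L.map PTdescr)) ↔ ∀ t ∈ X, t ∈ L := by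
  induction L generalizing X with
  | nil =>
    show PTSat X PTForm.bot ↔ _
    show X = ∅ ↔ _
    simp [Set.eq_empty_iff_forall_notMem]
  | cons s L ih =>
    show (∃ Y Z, X = Y ∪ Z ∧ PTSat Y (PTdescr s) ∧
        PTSat Z (PTtensorList (L.map PTdescr))) ↔ _
    constructor
    · rintro ⟨Y, Z, rfl, hY, hZ⟩ t ht
      rcases ht with ht | ht
      · rw [PT_sat_descr] at hY
        simp [hY t ht]
      · exact List.mem_cons_of_mem _ ((ih Z).1 hZ t ht)
    · intro h
      refine ⟨{t ∈ X | t = s}, {t ∈ X | t ∈ L}, ?_, ?_, ?_⟩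
      · ext t
        simp only [Set.mem_union, Set.mem_setOf_eq]
        constructor
        · intro ht
          rcases List.mem_cons.1 (h t ht) with h' | htL
          · exact Or.inl ⟨ht, h'⟩
          · exact Or.inr ⟨ht, htL⟩
        · rintro (⟨ht, _⟩ | ⟨ht, _⟩) <;> exact ht
      · rw [PT_sat_descr]; exact fun t ht => ht.2
      · exact (ih _).2 fun t ht => ht.2

lemma PT_classical_lit {V : Type} (s : V → Bool) (i : V) : IsClassical (PTlit s i) := by
  unfold PTlit
  split
  · exact IsClassical.pos i
  · exact IsClassical.neg i

lemma PT_classical_andAux {V : Type} (φ : PTForm V) (l : List (PTForm V))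
    (hφ : IsClassical φ) (hl : ∀ ψ ∈ l, IsClassical ψ) : IsClassical (PTandAux φ l) := by
  induction l generalizing φ with
  | nil => exact hφ
  | cons ψ l ih =>
    exact IsClassical.and hφ (ih ψ (hl ψ List.mem_cons_self)
      fun χ hχ => hl χ (List.mem_cons_of_mem _ hχ))

lemma PT_classical_descr {V : Type} [Fintype V] (s : V → Bool) :
    IsClassical (PTdescr s) := by
  unfold PTdescr
  cases h : (Finset.univ : Finset V).toList.map (PTlit s) with
  | nil => exact IsClassical.bot
  | cons φ l =>
    show IsClassical (PTandAux φ l)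
    have : ∀ ψ ∈ φ :: l, IsClassical ψ := by
      rw [← h]
      rintro ψ hψ
      obtain ⟨i, _, rfl⟩ := List.mem_map.1 hψ
      exact PT_classical_lit s i
    exact PT_classical_andAux φ l (this φ List.mem_cons_self)
      fun ψ hψ => this ψ (List.mem_cons_of_mem _ hψ)

lemma PT_classical_tensorList {V : Type} (l : List (PTForm V))
    (hl : ∀ ψ ∈ l, IsClassical ψ) : IsClassical (PTtensorList l) := by
  induction l with
  | nil => exact IsClassical.bot
  | cons φ l ih =>
    exact IsClassical.tensor (hl φ List.mem_cons_self)
      (ih fun ψ hψ => hl ψ (List.mem_cons_of_mem _ hψ))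


/-- **CPL characterizes the flat team properties.**  (a) Every classical
formula defines a flat team property; (b) every flat team property on a
finite (nonempty) index set is definable by a classical formula. -/
theorem cpl_characterizes_flat_properties (V : Type) [Fintype V] [Nonempty V] :
    (∀ φ : PTForm V, IsClassical φ →
      IsFlat {X : Set (V → Bool) | PTSat X φ}) ∧
    (∀ P : Set (Set (V → Bool)), IsFlat P →
      ∃ φ : PTForm V, IsClassical φ ∧ {X : Set (V → Bool) | PTSat X φ} = P) := by
  constructor
  · intro φ h X
    simp only [Set.mem_setOf_eq]
    exact PT_classical_flat h X
  · intro P hP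
    classical
    let S : Finset (V → Bool) := Finset.univ.filter (fun s => ({s} : Set (V → Bool)) ∈ P)
    refine ⟨PTtheta S, ?_, ?_⟩
    · exact PT_classical_tensorList _ (by
        rintro ψ hψ
        obtain ⟨s, _, rfl⟩ := List.mem_map.1 hψ
        exact PT_classical_descr s)
    · ext X
      simp only [Set.mem_setOf_eq]
      show PTSat X (PTtensorList (S.toList.map PTdescr)) ↔ X ∈ P
      rw [PT_sat_tensorList, hP X]
      constructor
      · intro h s hs
        have := h s hs
        rw [Finset.mem_toList, Finset.mem_filter] at this
        exact this.2
      · intro h s hs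
        rw [Finset.mem_toList, Finset.mem_filter]
        exact ⟨Finset.mem_univ s, h s hs⟩
end

section
/- For every formula φ of full propositional team logic (FPT) the following are equivalent: (i) φ has the Flatness Property (for every team X, X ⊨ φ iff {s} ⊨ φ for all s∈X); (ii) φ is semantically equivalent to a classical formula (there is a classical formula ψ such that for every team X, X ⊨ φ iff X ⊨ ψ); (iii) φ has the Downward Closure Property (if X ⊨ φ and Y ⊆ X then Y ⊨ φ) and the Union Closure Property (for every, possibly empty, family 𝒳 of teams each satisfying φ, the union ⋃𝒳 satisfies φ). -/
/-! ### Auxiliary lemmas for the flatness characterization -/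

lemma ptclassical_empty {V : Type} {ψ : PTForm V} (h : IsClassical ψ) :
    PTSat (∅ : Set (V → Bool)) ψ := by
  induction h with
  | pos i => intro s hs; exact absurd hs (Set.notMem_empty s)
  | neg i => intro s hs; exact absurd hs (Set.notMem_empty s)
  | bot => rfl
  | and _ _ ih1 ih2 => exact ⟨ih1, ih2⟩
  | tensor _ _ ih1 ih2 => exact ⟨∅, ∅, by simp, ih1, ih2⟩

lemma ptsingleton_tensor_cases {V : Type} {φ ψ : PTForm V} {s : V → Bool}
    (h : PTSat ({s} : Set (V → Bool)) (.tensor φ ψ)) :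
    PTSat ({s} : Set (V → Bool)) φ ∨ PTSat ({s} : Set (V → Bool)) ψ := by
  obtain ⟨Y, Z, hYZ, hY, hZ⟩ := h
  have hs : s ∈ Y ∪ Z := by rw [← hYZ]; exact rfl
  rcases hs with hs | hs
  · left
    have hYs : Y = {s} := by
      apply Set.Subset.antisymm
      · rw [hYZ]; exact Set.subset_union_left
      · exact Set.singleton_subset_iff.2 hs
    rwa [hYs] at hY
  · right
    have hZs : Z = {s} := by
      apply Set.Subset.antisymm
      · rw [hYZ]; exact Set.subset_union_right
      · exact Set.singleton_subset_iff.2 hs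
    rwa [hZs] at hZ

lemma ptclassical_flat {V : Type} {ψ : PTForm V} (h : IsClassical ψ) :
    ∀ X : Set (V → Bool), PTSat X ψ ↔ ∀ s ∈ X, PTSat ({s} : Set (V → Bool)) ψ := by
  induction h with
  | pos i => intro X; simp [PTSat]
  | neg i => intro X; simp [PTSat]
  | bot =>
    intro X
    simp only [PTSat]
    constructor
    · rintro rfl; simp
    · intro h
      ext s
      simp only [Set.mem_empty_iff_false, iff_false]
      intro hs
      exact Set.singleton_ne_empty s (h s hs)
  | and h1 h2 ih1 ih2 =>
    intro X
    simp only [PTSat]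
    constructor
    · rintro ⟨ha, hb⟩ s hs
      exact ⟨(ih1 X).1 ha s hs, (ih2 X).1 hb s hs⟩
    · intro h
      exact ⟨(ih1 X).2 fun s hs => (h s hs).1, (ih2 X).2 fun s hs => (h s hs).2⟩
  | @tensor φ' ψ' h1 h2 ih1 ih2 =>
    intro X
    simp only [PTSat]
    constructor
    · rintro ⟨Y, Z, rfl, hY, hZ⟩ s hs
      rcases hs with hs | hs
      · exact ⟨{s}, ∅, by simp, (ih1 Y).1 hY s hs, ptclassical_empty h2⟩
      · exact ⟨∅, {s}, by simp, ptclassical_empty h1, (ih2 Z).1 hZ s hs⟩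
    · intro h
      refine ⟨{s ∈ X | PTSat {s} φ'}, {s ∈ X | PTSat {s} ψ'}, ?_, ?_, ?_⟩
      · ext s
        simp only [Set.mem_union, Set.mem_setOf_eq]
        constructor
        · intro hs
          rcases ptsingleton_tensor_cases (h s hs) with h' | h'
          · exact Or.inl ⟨hs, h'⟩
          · exact Or.inr ⟨hs, h'⟩
        · rintro (⟨hs, _⟩ | ⟨hs, _⟩) <;> exact hs
      · exact (ih1 _).2 fun s hs => hs.2
      · exact (ih2 _).2 fun s hs => hs.2

/-- A list of all the variables occurring in a formula. -/
def PTvarList {V : Type} : PTForm V → List V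
  | .pos i => [i]
  | .neg i => [i]
  | .bot => []
  | .ne => []
  | .dep xs y => y :: xs
  | .indep xs ys => xs ++ ys
  | .incl xs ys => xs ++ ys
  | .and φ ψ => PTvarList φ ++ PTvarList ψ
  | .tensor φ ψ => PTvarList φ ++ PTvarList ψ
  | .nsor φ ψ => PTvarList φ ++ PTvarList ψ
  | .bor φ ψ => PTvarList φ ++ PTvarList ψ

/-- Satisfaction on singleton teams only depends on the variables occurring
in the formula. -/
lemma ptsingleton_local {V : Type} (φ : PTForm V) :
    ∀ s s' : V → Bool, (∀ i ∈ PTvarList φ, s i = s' i) →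
      PTSat ({s} : Set (V → Bool)) φ → PTSat ({s'} : Set (V → Bool)) φ := by
  induction φ with
  | pos i =>
    intro s s' h hs
    simp only [PTSat, Set.mem_singleton_iff, forall_eq] at *
    rw [← h i (by simp [PTvarList])]; exact hs
  | neg i =>
    intro s s' h hs
    simp only [PTSat, Set.mem_singleton_iff, forall_eq] at *
    rw [← h i (by simp [PTvarList])]; exact hs
  | bot =>
    intro s s' h hs
    exact absurd hs (Set.singleton_ne_empty s)
  | ne =>
    intro s s' _ _
    exact Set.singleton_ne_empty s'
  | dep xs y =>
    intro s s' _ _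
    simp [PTSat]
  | indep xs ys =>
    intro s s' _ _
    simp [PTSat]
  | incl xs ys =>
    intro s s' h hs
    simp only [PTSat, Set.mem_singleton_iff, exists_eq_left, forall_eq] at *
    intro p hp
    obtain ⟨a, b⟩ := p
    have hab := List.of_mem_zip hp
    have h1 : s a = s' a := h a (by simp [PTvarList, hab.1])
    have h2 : s b = s' b := h b (by simp [PTvarList, hab.2])
    have := hs (a, b) hp
    simp only at this ⊢
    rw [← h1, ← h2]; exact this
  | and φ' ψ' ihφ ihψ =>
    intro s s' h hs
    have hφ : ∀ i ∈ PTvarList φ', s i = s' i :=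
      fun i hi => h i (by simp [PTvarList, hi])
    have hψ : ∀ i ∈ PTvarList ψ', s i = s' i :=
      fun i hi => h i (by simp [PTvarList, hi])
    exact ⟨ihφ s s' hφ hs.1, ihψ s s' hψ hs.2⟩
  | tensor φ' ψ' ihφ ihψ =>
    intro s s' h hs
    have hφ : ∀ i ∈ PTvarList φ', s i = s' i :=
      fun i hi => h i (by simp [PTvarList, hi])
    have hψ : ∀ i ∈ PTvarList ψ', s i = s' i :=
      fun i hi => h i (by simp [PTvarList, hi])
    simp only [PTSat] at hs ⊢
    obtain ⟨Y, Z, hYZ, hY, hZ⟩ := hs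
    have hYs : Y ⊆ {s} := by rw [hYZ]; exact Set.subset_union_left
    have hZs : Z ⊆ {s} := by rw [hYZ]; exact Set.subset_union_right
    rcases Set.subset_singleton_iff_eq.1 hYs with rfl | rfl <;>
      rcases Set.subset_singleton_iff_eq.1 hZs with rfl | rfl
    · simp at hYZ
    · exact ⟨∅, {s'}, by simp, hY, ihψ s s' hψ hZ⟩
    · exact ⟨{s'}, ∅, by simp, ihφ s s' hφ hY, hZ⟩
    · exact ⟨{s'}, {s'}, by simp, ihφ s s' hφ hY, ihψ s s' hψ hZ⟩
  | nsor φ' ψ' ihφ ihψ =>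
    intro s s' h hs
    have hφ : ∀ i ∈ PTvarList φ', s i = s' i :=
      fun i hi => h i (by simp [PTvarList, hi])
    have hψ : ∀ i ∈ PTvarList ψ', s i = s' i :=
      fun i hi => h i (by simp [PTvarList, hi])
    simp only [PTSat] at hs ⊢
    rcases hs with h0 | ⟨Y, Z, hYZ, hYne, hZne, hY, hZ⟩
    · exact absurd h0 (Set.singleton_ne_empty s)
    · have hYs : Y = {s} := by
        have : Y ⊆ {s} := by rw [hYZ]; exact Set.subset_union_left
        exact (Set.Nonempty.subset_singleton_iff hYne).1 this
      have hZs : Z = {s} := by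
        have : Z ⊆ {s} := by rw [hYZ]; exact Set.subset_union_right
        exact (Set.Nonempty.subset_singleton_iff hZne).1 this
      subst hYs; subst hZs
      exact Or.inr ⟨{s'}, {s'}, by simp, Set.singleton_nonempty s',
        Set.singleton_nonempty s', ihφ s s' hφ hY, ihψ s s' hψ hZ⟩
  | bor φ' ψ' ihφ ihψ =>
    intro s s' h hs
    have hφ : ∀ i ∈ PTvarList φ', s i = s' i :=
      fun i hi => h i (by simp [PTvarList, hi])
    have hψ : ∀ i ∈ PTvarList ψ', s i = s' i :=
      fun i hi => h i (by simp [PTvarList, hi])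
    rcases hs with hs | hs
    · exact Or.inl (ihφ s s' hφ hs)
    · exact Or.inr (ihψ s s' hψ hs)

lemma pttensorList_sat {V : Type} (Q : PTForm V → (V → Bool) → Prop) :
    ∀ l : List (PTForm V),
      (∀ χ ∈ l, ∀ Y : Set (V → Bool), PTSat Y χ ↔ ∀ s ∈ Y, Q χ s) →
      ∀ X : Set (V → Bool),
        PTSat X (l.foldr PTForm.tensor PTForm.bot) ↔ ∀ s ∈ X, ∃ χ ∈ l, Q χ s := by
  intro l
  induction l with
  | nil =>
    intro _ X
    simp only [List.foldr_nil, PTSat]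
    constructor
    · rintro rfl; simp
    · intro h
      ext s
      simp only [Set.mem_empty_iff_false, iff_false]
      intro hs
      simpa using h s hs
  | cons χ l ih =>
    intro hl X
    simp only [List.foldr_cons, PTSat]
    constructor
    · rintro ⟨Y, Z, rfl, hY, hZ⟩ s hs
      rcases hs with hs | hs
      · exact ⟨χ, by simp, (hl χ (by simp) Y).1 hY s hs⟩
      · obtain ⟨χ', hχ', hq⟩ := (ih (fun c hc => hl c (by simp [hc])) Z).1 hZ s hs
        exact ⟨χ', by simp [hχ'], hq⟩
    · intro h
      refine ⟨{s ∈ X | Q χ s}, {s ∈ X | ∃ χ' ∈ l, Q χ' s}, ?_, ?_, ?_⟩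
      · ext s
        simp only [Set.mem_union, Set.mem_setOf_eq]
        constructor
        · intro hs
          rcases h s hs with ⟨χ', hχ', hq⟩
          rcases List.mem_cons.1 hχ' with rfl | hm
          · exact Or.inl ⟨hs, hq⟩
          · exact Or.inr ⟨hs, χ', hm, hq⟩
        · rintro (⟨hs, _⟩ | ⟨hs, _⟩) <;> exact hs
      · exact (hl χ (by simp) _).2 fun s hs => hs.2
      · exact (ih (fun c hc => hl c (by simp [hc])) _).2 fun s hs => hs.2

lemma pttensorList_classical {V : Type} (l : List (PTForm V))
    (h : ∀ χ ∈ l, IsClassical χ) :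
    IsClassical (l.foldr PTForm.tensor PTForm.bot) := by
  induction l with
  | nil => exact IsClassical.bot
  | cons χ l ih =>
    exact IsClassical.tensor (h χ (by simp)) (ih fun c hc => h c (by simp [hc]))

/-- A classical tautology, used as the empty conjunction. -/
def PTtop : PTForm ℕ := .tensor (.pos 0) (.neg 0)

lemma PTtop_sat (X : Set (ℕ → Bool)) : PTSat X PTtop := by
  show ∃ Y Z, X = Y ∪ Z ∧ PTSat Y (.pos 0) ∧ PTSat Z (.neg 0)
  refine ⟨{s ∈ X | s 0 = true}, {s ∈ X | s 0 = false}, ?_,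
    fun s hs => hs.2, fun s hs => hs.2⟩
  ext s
  simp only [Set.mem_union, Set.mem_setOf_eq]
  constructor
  · intro hs
    rcases Bool.eq_false_or_eq_true (s 0) with h | h
    · exact Or.inl ⟨hs, h⟩
    · exact Or.inr ⟨hs, h⟩
  · rintro (⟨hs, _⟩ | ⟨hs, _⟩) <;> exact hs

lemma PTtop_classical : IsClassical PTtop :=
  IsClassical.tensor (IsClassical.pos 0) (IsClassical.neg 0)

lemma PTlit_sat (t : ℕ → Bool) (j : ℕ) (X : Set (ℕ → Bool)) :
    PTSat X (PTlit t j) ↔ ∀ s ∈ X, s j = t j := by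
  unfold PTlit
  cases h : t j <;> simp [PTSat, h]

lemma PTlit_classical (t : ℕ → Bool) (j : ℕ) : IsClassical (PTlit t j) := by
  unfold PTlit
  split
  · exact IsClassical.pos j
  · exact IsClassical.neg j

/-- The conjunction of literals describing the valuation `t` on `L`. -/
def PTconj (t : ℕ → Bool) (L : List ℕ) : PTForm ℕ :=
  (L.map (PTlit t)).foldr .and PTtop

lemma PTconj_classical (t : ℕ → Bool) (L : List ℕ) : IsClassical (PTconj t L) := by
  induction L with
  | nil => exact PTtop_classical
  | cons i L ih => exact IsClassical.and (PTlit_classical t i) ih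

lemma PTconj_sat (t : ℕ → Bool) (L : List ℕ) (X : Set (ℕ → Bool)) :
    PTSat X (PTconj t L) ↔ ∀ s ∈ X, ∀ i ∈ L, s i = t i := by
  induction L with
  | nil =>
    simp only [PTconj, List.map_nil, List.foldr_nil, List.not_mem_nil,
      false_implies, implies_true, iff_true]
    exact PTtop_sat X
  | cons i L ih =>
    simp only [PTconj, List.map_cons, List.foldr_cons]
    constructor
    · rintro ⟨h1, h2⟩ s hs j hj
      rcases List.mem_cons.1 hj with rfl | hj
      · exact (PTlit_sat t j X).1 h1 s hs
      · exact ih.1 h2 s hs j hj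
    · intro h
      exact ⟨(PTlit_sat t i X).2 fun s hs => h s hs i (by simp),
        ih.2 fun s hs j hj => h s hs j (by simp [hj])⟩

/-- The hard direction: a flat formula is equivalent to a classical one. -/
lemma ptflat_to_classical (φ : PTForm ℕ)
    (hflat : ∀ X : Set (ℕ → Bool),
      PTSat X φ ↔ ∀ s ∈ X, PTSat ({s} : Set (ℕ → Bool)) φ) :
    ∃ ψ : PTForm ℕ, IsClassical ψ ∧
      ∀ X : Set (ℕ → Bool), PTSat X φ ↔ PTSat X ψ := by
  classical
  set L := PTvarList φ with hL
  set F := L.toFinset with hF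
  set ext : (↥F → Bool) → (ℕ → Bool) :=
    fun a i => if h : i ∈ F then a ⟨i, h⟩ else false with hext
  set mk : (↥F → Bool) → PTForm ℕ := fun a =>
    if PTSat ({ext a} : Set (ℕ → Bool)) φ then PTconj (ext a) L else .bot with hmk
  set A : List (↥F → Bool) := (Finset.univ : Finset (↥F → Bool)).toList with hA
  have hcl : ∀ χ ∈ A.map mk, IsClassical χ := by
    intro χ hχ
    simp only [List.mem_map] at hχ
    obtain ⟨a, _, rfl⟩ := hχ
    by_cases h : PTSat ({ext a} : Set (ℕ → Bool)) φ
    · rw [hmk]; simp only [if_pos h]; exact PTconj_classical (ext a) L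
    · rw [hmk]; simp only [if_neg h]; exact IsClassical.bot
  refine ⟨(A.map mk).foldr .tensor .bot, pttensorList_classical _ hcl, fun X => ?_⟩
  rw [pttensorList_sat (fun χ s => PTSat {s} χ) (A.map mk)
    (fun χ hχ => ptclassical_flat (hcl χ hχ)) X, hflat X]
  refine forall₂_congr fun s _ => ?_
  constructor
  · intro hs
    set a : ↥F → Bool := fun i => s i.1 with ha
    have hagree : ∀ i ∈ L, s i = ext a i := by
      intro i hi
      have hiF : i ∈ F := List.mem_toFinset.2 hi
      simp [hext, ha, hiF]
    have hextφ : PTSat ({ext a} : Set (ℕ → Bool)) φ :=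
      ptsingleton_local φ s (ext a) hagree hs
    refine ⟨mk a, List.mem_map_of_mem (f := mk) (by rw [hA]; exact Finset.mem_toList.2 (Finset.mem_univ a)), ?_⟩
    rw [hmk]
    simp only [if_pos hextφ]
    refine (PTconj_sat (ext a) L {s}).2 ?_
    intro t ht i hi
    rw [Set.mem_singleton_iff] at ht
    subst ht
    exact hagree i hi
  · rintro ⟨χ, hχ, hsχ⟩
    simp only [List.mem_map] at hχ
    obtain ⟨a, _, rfl⟩ := hχ
    by_cases h : PTSat ({ext a} : Set (ℕ → Bool)) φ
    · rw [hmk] at hsχ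
      simp only [if_pos h] at hsχ
      have hag : ∀ i ∈ L, ext a i = s i := by
        intro i hi
        exact ((PTconj_sat (ext a) L {s}).1 hsχ s rfl i hi).symm
      exact ptsingleton_local φ (ext a) s hag h
    · rw [hmk] at hsχ
      simp only [if_neg h] at hsχ
      exact absurd hsχ (Set.singleton_ne_empty s)

/-- For every FPT formula `φ` the following are equivalent:
(i) flatness; (ii) semantic equivalence to a classical formula;
(iii) downward closure together with union closure (over arbitrary,
possibly empty, families of teams). -/
theorem flatness_characterization (φ : PTForm ℕ) :
    ((∀ X : Set (ℕ → Bool),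
        PTSat X φ ↔ ∀ s ∈ X, PTSat ({s} : Set (ℕ → Bool)) φ) ↔
      (∃ ψ : PTForm ℕ, IsClassical ψ ∧
        ∀ X : Set (ℕ → Bool), PTSat X φ ↔ PTSat X ψ)) ∧
    ((∀ X : Set (ℕ → Bool),
        PTSat X φ ↔ ∀ s ∈ X, PTSat ({s} : Set (ℕ → Bool)) φ) ↔
      ((∀ X Y : Set (ℕ → Bool), PTSat X φ → Y ⊆ X → PTSat Y φ) ∧
       (∀ 𝒳 : Set (Set (ℕ → Bool)), (∀ X ∈ 𝒳, PTSat X φ) → PTSat (⋃₀ 𝒳) φ))) := by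
  constructor
  · constructor
    · exact ptflat_to_classical φ
    · rintro ⟨ψ, hψ, heq⟩ X
      rw [heq X, ptclassical_flat hψ X]
      exact forall₂_congr fun s _ => (heq {s}).symm
  · constructor
    · intro hflat
      constructor
      · intro X Y hX hYX
        rw [hflat Y]
        intro s hs
        exact (hflat X).1 hX s (hYX hs)
      · intro 𝒳 h
        rw [hflat]
        intro s hs
        obtain ⟨X, hX, hsX⟩ := hs
        exact (hflat X).1 (h X hX) s hsX
    · rintro ⟨hdown, hunion⟩ X
      constructor
      · intro hX s hs
        exact hdown X {s} hX (Set.singleton_subset_iff.2 hs)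
      · intro h
        have := hunion {Y | ∃ s ∈ X, Y = {s}}
          (by rintro Y ⟨s, hs, rfl⟩; exact h s hs)
        have hXeq : ⋃₀ {Y : Set (ℕ → Bool) | ∃ s ∈ X, Y = {s}} = X := by
          ext t
          simp only [Set.mem_sUnion, Set.mem_setOf_eq]
          constructor
          · rintro ⟨Y, ⟨s, hs, rfl⟩, ht⟩
            rw [Set.mem_singleton_iff] at ht
            subst ht
            exact hs
          · intro ht
            exact ⟨{t}, ⟨t, ht, rfl⟩, rfl⟩
        rwa [hXeq] at this
end

section
/- Let N = {i₁,…,iₙ} be a finite set of indices and X a team on N. For every team Y on N, Y ⊨ Θ**_X if and only if Y = X or Y = ∅. -/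
lemma sat_lit {V : Type} (s : V → Bool) (i : V) (Y : Set (V → Bool)) :
    PTSat Y (PTlit s i) ↔ ∀ t ∈ Y, t i = s i := by
  unfold PTlit
  cases h : s i <;> simp [PTSat, h]

lemma sat_andAux {V : Type} (φ : PTForm V) (l : List (PTForm V)) (Y : Set (V → Bool)) :
    PTSat Y (PTandAux φ l) ↔ PTSat Y φ ∧ ∀ ψ ∈ l, PTSat Y ψ := by
  induction l generalizing φ with
  | nil => simp [PTandAux]
  | cons ψ l ih =>
    simp only [PTandAux, PTSat, ih]
    constructor
    · rintro ⟨h1, h2, h3⟩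
      refine ⟨h1, fun χ hχ => ?_⟩
      rcases List.mem_cons.1 hχ with rfl | hχ
      · exact h2
      · exact h3 χ hχ
    · rintro ⟨h1, h2⟩
      exact ⟨h1, h2 ψ List.mem_cons_self, fun χ hχ => h2 χ (List.mem_cons_of_mem _ hχ)⟩

lemma sat_descr {V : Type} [Fintype V] [Nonempty V] (s : V → Bool) (Y : Set (V → Bool)) :
    PTSat Y (PTdescr s) ↔ ∀ t ∈ Y, t = s := by
  have hmem : ∀ j : V, j ∈ (Finset.univ : Finset V).toList := fun j => by
    simp [Finset.mem_toList]
  unfold PTdescr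
  cases h : (Finset.univ : Finset V).toList with
  | nil =>
    obtain ⟨i⟩ := ‹Nonempty V›
    have := hmem i; rw [h] at this; simp at this
  | cons j l =>
    have hmem' : ∀ k : V, k ∈ j :: l := fun k => h ▸ hmem k
    simp only [List.map_cons, PTandList, sat_andAux, sat_lit]
    constructor
    · rintro ⟨h1, h2⟩ t ht
      funext k
      rcases List.mem_cons.1 (hmem' k) with hk | hk
      · exact hk ▸ h1 t ht
      · have := h2 (PTlit s k) (List.mem_map_of_mem hk)
        exact (sat_lit s k Y).1 this t ht
    · intro hY
      refine ⟨fun t ht => by rw [hY t ht], fun ψ hψ => ?_⟩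
      obtain ⟨k, _, rfl⟩ := List.mem_map.1 hψ
      exact (sat_lit s k Y).2 (fun t ht => by rw [hY t ht])

lemma sat_nsorAux_descr {V : Type} [Fintype V] [Nonempty V] (s : V → Bool)
    (l : List (V → Bool)) (Y : Set (V → Bool)) :
    PTSat Y (PTnsorAux (PTdescr s) (l.map PTdescr)) ↔
      Y = ∅ ∨ Y = {t | t ∈ s :: l} := by
  induction l generalizing s Y with
  | nil =>
    simp only [List.map_nil, PTnsorAux, sat_descr]
    constructor
    · intro h
      rcases Set.eq_empty_or_nonempty Y with hY | hY
      · exact Or.inl hY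
      · refine Or.inr (Set.eq_of_subset_of_subset (fun t ht => ?_) (fun t ht => ?_))
        · simp [h t ht]
        · simp at ht
          obtain ⟨u, hu⟩ := hY
          rwa [ht, ← h u hu]
    · rintro (rfl | rfl)
      · intro t ht; exact absurd ht (Set.notMem_empty t)
      · intro t ht; simpa using ht
  | cons u l ih =>
    simp only [List.map_cons, PTnsorAux]
    show Y = ∅ ∨ _ ↔ _
    constructor
    · rintro (rfl | ⟨Y₁, Y₂, rfl, hY₁ne, hY₂ne, hY₁, hY₂⟩)
      · exact Or.inl rfl
      · right
        have h1 : Y₁ = {s} := by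
          have := (sat_descr s Y₁).1 hY₁
          obtain ⟨t, ht⟩ := hY₁ne
          refine Set.eq_of_subset_of_subset (fun x hx => by simp [this x hx]) ?_
          intro x hx; simp at hx; rw [hx, ← this t ht]; exact ht
        have h2 : Y₂ = {t | t ∈ u :: l} := by
          rcases (ih u Y₂).1 hY₂ with h | h
          · exact absurd h (Set.nonempty_iff_ne_empty.1 hY₂ne)
          · exact h
        rw [h1, h2]
        ext t; simp [List.mem_cons]
    · rintro (rfl | rfl)
      · exact Or.inl rfl
      · right
        refine ⟨{s}, {t | t ∈ u :: l}, ?_, Set.singleton_nonempty s, ⟨u, by simp⟩, ?_, ?_⟩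
        · ext t; simp [List.mem_cons]
        · exact (sat_descr s _).2 (fun t ht => by simpa using ht)
        · exact (ih u _).2 (Or.inr rfl)

/-- For a team `X` on a finite (nonempty) index set, a team `Y` satisfies
`Θ**_X` if and only if `Y = X` or `Y = ∅`. -/
theorem thetaSS_characterizes_team_or_empty (V : Type) [Fintype V] [Nonempty V]
    (X : Finset (V → Bool)) (Y : Set (V → Bool)) :
    PTSat Y (PTthetaSS X) ↔ Y = ↑X ∨ Y = ∅ := by
  unfold PTthetaSS
  cases h : X.toList with
  | nil =>
    have hX : X = ∅ := Finset.toList_eq_nil.1 h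
    subst hX
    simp only [List.map_nil, PTnsorList, PTSat]
    simp
  | cons s l =>
    have hm : ∀ t, t ∈ s :: l ↔ t ∈ X := fun t => by
      rw [← h, Finset.mem_toList]
    simp only [List.map_cons, PTnsorList, sat_nsorAux_descr]
    have : {t | t ∈ s :: l} = (↑X : Set (V → Bool)) := by
      ext t; simp only [Set.mem_setOf_eq, Finset.mem_coe]; exact hm t
    rw [this]
    tauto
end

section
/- Strong propositional team logic PT⁺ characterizes the set of all team properties: for every finite index set N = {i₁,…,iₙ} and every set P ⊆ 𝒫(2^N) of teams on N, there is a formula φ in the language of PT⁺ whose variables are among {p_i : i∈N} such that for every team Y on N, Y ⊨ φ if and only if Y ∈ P. -/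
section Aux
variable {V : Type}

lemma ptsat_andAux (X : Set (V → Bool)) (φ : PTForm V) (l : List (PTForm V)) :
    PTSat X (PTandAux φ l) ↔ PTSat X φ ∧ ∀ ψ ∈ l, PTSat X ψ := by
  induction l generalizing φ with
  | nil => simp [PTandAux]
  | cons ψ l ih =>
    simp only [PTandAux, PTSat, ih, List.mem_cons]
    constructor
    · rintro ⟨h1, h2, h3⟩
      exact ⟨h1, fun χ hχ => hχ.elim (fun e => e ▸ h2) (h3 χ)⟩
    · rintro ⟨h1, h2⟩
      exact ⟨h1, h2 ψ (Or.inl rfl), fun χ hχ => h2 χ (Or.inr hχ)⟩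

lemma ptsat_lit (X : Set (V → Bool)) (s : V → Bool) (i : V) :
    PTSat X (PTlit s i) ↔ ∀ t ∈ X, t i = s i := by
  unfold PTlit
  by_cases h : s i <;> simp [h, PTSat]

lemma ptsat_descr [Fintype V] [Nonempty V] (X : Set (V → Bool)) (s : V → Bool) :
    PTSat X (PTdescr s) ↔ ∀ t ∈ X, t = s := by
  unfold PTdescr PTandList
  have hne : (Finset.univ : Finset V).toList ≠ [] := by
    simp only [ne_eq, Finset.toList_eq_nil]
    exact Finset.univ_nonempty.ne_empty
  rcases hl : (Finset.univ : Finset V).toList with _ | ⟨i, l⟩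
  · exact absurd hl hne
  · simp only [List.map_cons]
    rw [ptsat_andAux]
    constructor
    · rintro ⟨h1, h2⟩ t ht
      funext j
      have hj : j ∈ (Finset.univ : Finset V).toList := by
        simp [Finset.mem_toList]
      rw [hl] at hj
      rcases List.mem_cons.mp hj with e | hj
      · exact e ▸ (ptsat_lit X s i).mp h1 t ht
      · have := h2 (PTlit s j) (List.mem_map_of_mem hj)
        exact (ptsat_lit X s j).mp this t ht
    · intro h
      refine ⟨(ptsat_lit X s i).mpr fun t ht => by rw [h t ht], ?_⟩
      intro ψ hψ
      rcases List.mem_map.mp hψ with ⟨j, _, rfl⟩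
      exact (ptsat_lit X s j).mpr fun t ht => by rw [h t ht]

lemma ptsat_tensorStar [Fintype V] [Nonempty V] (X : Set (V → Bool)) (l : List (V → Bool)) :
    PTSat X (PTtensorList (l.map (fun s => PTForm.and (PTdescr s) .ne)))
      ↔ X = {t | t ∈ l} := by
  induction l generalizing X with
  | nil => simp [PTtensorList, PTSat]
  | cons s l ih =>
    simp only [List.map_cons, PTtensorList, List.foldr_cons]
    show PTSat X (.tensor _ _) ↔ _
    constructor
    · rintro ⟨Y, Z, rfl, ⟨h1, h2⟩, h3⟩
      have hZ : Z = {t | t ∈ l} := (ih Z).mp h3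
      rw [ptsat_descr] at h1
      have hY : Y = {s} := by
        apply Set.eq_singleton_iff_nonempty_unique_mem.mpr
        exact ⟨Set.nonempty_iff_ne_empty.mpr h2, h1⟩
      ext t
      simp [hY, hZ, List.mem_cons, eq_comm]
    · rintro rfl
      refine ⟨{s}, {t | t ∈ l}, ?_, ⟨?_, ?_⟩, (ih _).mpr rfl⟩
      · ext t; simp [List.mem_cons]
      · rw [ptsat_descr]; simp
      · exact (Set.singleton_nonempty s).ne_empty

lemma ptsat_borList (X : Set (V → Bool)) (l : List (PTForm V)) :
    PTSat X (PTborList l) ↔ ∃ φ ∈ l, PTSat X φ := by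
  induction l with
  | nil =>
    simp only [PTborList, List.foldr_nil]
    show (X = ∅ ∧ X ≠ ∅) ↔ _
    simp
  | cons φ l ih =>
    simp only [PTborList, List.foldr_cons] at *
    show PTSat X φ ∨ PTSat X _ ↔ _
    rw [ih]
    simp

lemma isptplus_andAux {φ : PTForm V} {l : List (PTForm V)}
    (h1 : IsPTPlus φ) (h2 : ∀ ψ ∈ l, IsPTPlus ψ) : IsPTPlus (PTandAux φ l) := by
  induction l generalizing φ with
  | nil => exact h1
  | cons ψ l ih =>
    exact .and h1 (ih (h2 ψ (List.mem_cons_self)) fun χ hχ => h2 χ (List.mem_cons_of_mem _ hχ))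

lemma isptplus_lit (s : V → Bool) (i : V) : IsPTPlus (PTlit s i) := by
  unfold PTlit; split <;> constructor

lemma isptplus_andList {l : List (PTForm V)} (h : ∀ ψ ∈ l, IsPTPlus ψ) :
    IsPTPlus (PTandList l) := by
  rcases l with _ | ⟨φ, l⟩
  · exact .bot
  · exact isptplus_andAux (h φ (List.mem_cons_self))
      fun χ hχ => h χ (List.mem_cons_of_mem _ hχ)

lemma isptplus_descr [Fintype V] (s : V → Bool) : IsPTPlus (PTdescr s) := by
  apply isptplus_andList
  intro ψ hψ
  rcases List.mem_map.mp hψ with ⟨j, _, rfl⟩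
  exact isptplus_lit s j

lemma isptplus_tensorList {l : List (PTForm V)} (h : ∀ ψ ∈ l, IsPTPlus ψ) :
    IsPTPlus (PTtensorList l) := by
  induction l with
  | nil => exact .bot
  | cons φ l ih =>
    exact .tensor (h φ (List.mem_cons_self))
      (ih fun χ hχ => h χ (List.mem_cons_of_mem _ hχ))

lemma isptplus_borList {l : List (PTForm V)} (h : ∀ ψ ∈ l, IsPTPlus ψ) :
    IsPTPlus (PTborList l) := by
  induction l with
  | nil => exact .and .bot .ne
  | cons φ l ih =>
    exact .bor (h φ (List.mem_cons_self))
      (ih fun χ hχ => h χ (List.mem_cons_of_mem _ hχ))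

end Aux

/-- **PT⁺ characterizes all team properties.**  For every team property `P`
on a finite (nonempty) index set there is a PT⁺ formula defining exactly the
teams in `P`. -/
theorem ptplus_expressively_complete (V : Type) [Fintype V] [Nonempty V]
    (P : Set (Set (V → Bool))) :
    ∃ φ : PTForm V, IsPTPlus φ ∧
      ∀ Y : Set (V → Bool), PTSat Y φ ↔ Y ∈ P := by
  classical
  refine ⟨PTborList ((Set.toFinite P).toFinset.toList.map
      (fun X => PTtensorList ((Set.toFinite X).toFinset.toList.map
        (fun s => PTForm.and (PTdescr s) .ne)))), ?_, ?_⟩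
  · apply isptplus_borList
    intro ψ hψ
    rcases List.mem_map.mp hψ with ⟨X, _, rfl⟩
    apply isptplus_tensorList
    intro χ hχ
    rcases List.mem_map.mp hχ with ⟨s, _, rfl⟩
    exact .and (isptplus_descr s) .ne
  · intro Y
    rw [ptsat_borList]
    constructor
    · rintro ⟨φ, hφ, hY⟩
      rcases List.mem_map.mp hφ with ⟨X, hX, rfl⟩
      rw [ptsat_tensorStar] at hY
      have : Y = X := by
        rw [hY]; ext t
        simp only [Set.mem_setOf_eq, Finset.mem_toList, Set.Finite.mem_toFinset]
      rw [this]
      have := Finset.mem_toList.mp hX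
      simpa using this
    · intro hY
      refine ⟨_, List.mem_map_of_mem (Finset.mem_toList.mpr (by simpa using hY)), ?_⟩
      rw [ptsat_tensorStar]
      ext t
      simp only [Set.mem_setOf_eq, Finset.mem_toList, Set.Finite.mem_toFinset]
end

section
/- Strong propositional union closed logic PU⁺ characterizes the set of all union closed team properties: for every finite index set N = {i₁,…,iₙ}, (a) for every formula φ in the language of PU⁺ with variables among {p_i : i∈N}, the set {Y ⊆ 2^N : Y ⊨ φ} is closed under unions of nonempty subfamilies; and (b) for every set P ⊆ 𝒫(2^N) of teams on N with ⋃𝒳 ∈ P for every nonempty 𝒳 ⊆ P, there is a formula φ in the language of PU⁺ with variables among {p_i : i∈N} such that for every team Y on N, Y ⊨ φ if and only if Y ∈ P. -/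
section MyAux

variable {V : Type}

lemma myPTlit_sat (s : V → Bool) (i : V) (Y : Set (V → Bool)) :
    PTSat Y (PTlit s i) ↔ ∀ t ∈ Y, t i = s i := by
  unfold PTlit
  cases h : s i <;> simp [PTSat, h]

lemma myPTandAux_sat (Y : Set (V → Bool)) (φ : PTForm V) (l : List (PTForm V)) :
    PTSat Y (PTandAux φ l) ↔ PTSat Y φ ∧ ∀ ψ ∈ l, PTSat Y ψ := by
  induction l generalizing φ with
  | nil => simp [PTandAux]
  | cons ψ l ih =>
    show PTSat Y (.and φ (PTandAux ψ l)) ↔ _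
    rw [show PTSat Y (.and φ (PTandAux ψ l)) = (PTSat Y φ ∧ PTSat Y (PTandAux ψ l)) from rfl, ih]
    simp [and_assoc]

lemma myPTdescr_sat [Fintype V] [Nonempty V] (s : V → Bool) (Y : Set (V → Bool)) :
    PTSat Y (PTdescr s) ↔ ∀ t ∈ Y, t = s := by
  have hne : (Finset.univ : Finset V).toList ≠ [] := by
    intro h
    exact Finset.univ_nonempty.ne_empty (Finset.toList_eq_nil.mp h)
  unfold PTdescr
  rcases h : (Finset.univ : Finset V).toList with _ | ⟨i, l⟩
  · exact absurd h hne
  · rw [List.map_cons]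
    show PTSat Y (PTandAux _ _) ↔ _
    rw [myPTandAux_sat]
    constructor
    · rintro ⟨h1, h2⟩ t ht
      funext j
      have hj : j ∈ (Finset.univ : Finset V).toList := by simp [Finset.mem_toList]
      rw [h] at hj
      rcases List.mem_cons.mp hj with hj | hj
      · subst hj; exact (myPTlit_sat s j Y).mp h1 t ht
      · exact (myPTlit_sat s j Y).mp (h2 _ (List.mem_map_of_mem hj)) t ht
    · intro hY
      constructor
      · exact (myPTlit_sat s i Y).mpr fun t ht => by rw [hY t ht]
      · intro ψ hψ
        rcases List.mem_map.mp hψ with ⟨j, _, rfl⟩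
        exact (myPTlit_sat s j Y).mpr fun t ht => by rw [hY t ht]

lemma myPTthetaStar_core [Fintype V] [Nonempty V]
    (l : List (V → Bool)) (Y : Set (V → Bool)) :
    PTSat Y (PTtensorList (l.map (fun s => .and (PTdescr s) .ne))) ↔
      Y = {t | t ∈ l} := by
  induction l generalizing Y with
  | nil =>
    show PTSat Y .bot ↔ _
    simp [PTSat]
  | cons s l ih =>
    show PTSat Y (.tensor (.and (PTdescr s) .ne) _) ↔ _
    constructor
    · rintro ⟨Y₁, Y₂, rfl, ⟨h1, h2⟩, h3⟩
      have hY₁ : Y₁ = {s} := by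
        rw [myPTdescr_sat] at h1
        exact Set.eq_singleton_iff_nonempty_unique_mem.mpr
          ⟨Set.nonempty_iff_ne_empty.mpr h2, h1⟩
      have h3' := (ih Y₂).mp h3
      subst hY₁; rw [h3']; ext t; simp [List.mem_cons]
    · intro hY
      refine ⟨{s}, {t | t ∈ l}, ?_, ⟨?_, ?_⟩, (ih _).mpr rfl⟩
      · rw [hY]; ext t; simp [List.mem_cons]
      · rw [myPTdescr_sat]; simp
      · exact Set.singleton_ne_empty s

lemma myPTthetaStar_sat [Fintype V] [Nonempty V]
    (X : Finset (V → Bool)) (Y : Set (V → Bool)) :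
    PTSat Y (PTthetaStar X) ↔ Y = ↑X := by
  rw [PTthetaStar, myPTthetaStar_core]
  constructor <;> (intro h; rw [h]; ext t; simp [Finset.mem_toList])

/-- `α_X := Θ*_X ⊛ Θ*_X`, defining `{∅, X}`. -/
noncomputable def myPTalpha [Fintype V] (X : Finset (V → Bool)) : PTForm V :=
  .nsor (PTthetaStar X) (PTthetaStar X)

lemma myPTalpha_sat [Fintype V] [Nonempty V]
    (X : Finset (V → Bool)) (Y : Set (V → Bool)) :
    PTSat Y (myPTalpha X) ↔ Y = ∅ ∨ Y = ↑X := by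
  show (Y = ∅ ∨ ∃ Y₁ Y₂, _) ↔ _
  constructor
  · rintro (rfl | ⟨Y₁, Y₂, rfl, -, -, h1, h2⟩)
    · exact Or.inl rfl
    · rw [myPTthetaStar_sat] at h1 h2
      right; rw [h1, h2, Set.union_self]
  · rintro (rfl | rfl)
    · exact Or.inl rfl
    · rcases eq_or_ne (X : Set (V → Bool)) ∅ with h | h
      · exact Or.inl h
      · refine Or.inr ⟨↑X, ↑X, (Set.union_self _).symm,
          Set.nonempty_iff_ne_empty.mpr h, Set.nonempty_iff_ne_empty.mpr h,
          (myPTthetaStar_sat X _).mpr rfl, (myPTthetaStar_sat X _).mpr rfl⟩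

lemma myTensorAlpha_sat [Fintype V] [Nonempty V]
    (L : List (Finset (V → Bool))) (Y : Set (V → Bool)) :
    PTSat Y (PTtensorList (L.map myPTalpha)) ↔
      ∃ M : List (Finset (V → Bool)), (∀ X ∈ M, X ∈ L) ∧
        Y = ⋃ X ∈ M, (↑X : Set (V → Bool)) := by
  classical
  induction L generalizing Y with
  | nil =>
    show PTSat Y .bot ↔ _
    constructor
    · intro h; exact ⟨[], by simp, by simpa [PTSat] using h⟩
    · rintro ⟨M, hM, rfl⟩
      have : M = [] := by
        cases M with
        | nil => rfl
        | cons a M => exact absurd (hM a (by simp)) (by simp)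
      subst this; simp [PTSat]
  | cons X L ih =>
    show PTSat Y (.tensor (myPTalpha X) _) ↔ _
    constructor
    · rintro ⟨Y₁, Y₂, rfl, h1, h2⟩
      rw [myPTalpha_sat] at h1
      rcases ih Y₂ |>.mp h2 with ⟨M, hM, rfl⟩
      rcases h1 with rfl | rfl
      · exact ⟨M, fun Z hZ => List.mem_cons_of_mem _ (hM Z hZ), by simp⟩
      · refine ⟨X :: M, ?_, by simp⟩
        intro Z hZ
        rcases List.mem_cons.mp hZ with rfl | hZ
        · exact List.mem_cons_self
        · exact List.mem_cons_of_mem _ (hM Z hZ)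
    · rintro ⟨M, hM, rfl⟩
      by_cases hX : X ∈ M
      · refine ⟨↑X, ⋃ Z ∈ M.filter (fun Z => Z ≠ X), (↑Z : Set (V → Bool)),
          ?_, (myPTalpha_sat X _).mpr (Or.inr rfl),
          (ih _).mpr ⟨M.filter (fun Z => Z ≠ X), ?_, rfl⟩⟩
        · ext t
          simp only [Set.mem_iUnion, Set.mem_union, List.mem_filter, decide_eq_true_eq]
          constructor
          · rintro ⟨Z, hZ, ht⟩
            rcases eq_or_ne Z X with rfl | hne
            · exact Or.inl ht
            · exact Or.inr ⟨Z, ⟨hZ, hne⟩, ht⟩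
          · rintro (ht | ⟨Z, ⟨hZ, _⟩, ht⟩)
            · exact ⟨X, hX, ht⟩
            · exact ⟨Z, hZ, ht⟩
        · intro Z hZ
          rcases List.mem_filter.mp hZ with ⟨hZ, hne⟩
          rcases List.mem_cons.mp (hM Z hZ) with rfl | h
          · exact absurd rfl (of_decide_eq_true hne)
          · exact h
      · refine ⟨∅, _, (Set.empty_union _).symm, (myPTalpha_sat X _).mpr (Or.inl rfl),
          (ih _).mpr ⟨M, ?_, rfl⟩⟩
        intro Z hZ
        rcases List.mem_cons.mp (hM Z hZ) with rfl | h
        · exact absurd hZ hX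
        · exact h

lemma myPTandAux_puplus {φ : PTForm V} {l : List (PTForm V)}
    (hφ : IsPUPlus φ) (hl : ∀ ψ ∈ l, IsPUPlus ψ) : IsPUPlus (PTandAux φ l) := by
  induction l generalizing φ with
  | nil => exact hφ
  | cons ψ l ih =>
    exact IsPUPlus.and hφ (ih (hl ψ (by simp)) fun χ hχ => hl χ (by simp [hχ]))

lemma myPTdescr_puplus [Fintype V] (s : V → Bool) : IsPUPlus (PTdescr s) := by
  unfold PTdescr
  rcases h : ((Finset.univ : Finset V).toList.map (PTlit s)) with _ | ⟨φ, l⟩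
  · exact IsPUPlus.bot
  · show IsPUPlus (PTandAux φ l)
    have hmem : ∀ ψ ∈ φ :: l, IsPUPlus ψ := by
      rw [← h]
      intro ψ hψ
      rcases List.mem_map.mp hψ with ⟨j, _, rfl⟩
      unfold PTlit
      cases s j
      · exact IsPUPlus.neg j
      · exact IsPUPlus.pos j
    exact myPTandAux_puplus (hmem φ (by simp)) fun ψ hψ => hmem ψ (by simp [hψ])

lemma myPTtensorList_puplus {l : List (PTForm V)}
    (hl : ∀ ψ ∈ l, IsPUPlus ψ) : IsPUPlus (PTtensorList l) := by
  induction l with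
  | nil => exact IsPUPlus.bot
  | cons φ l ih =>
    exact IsPUPlus.tensor (hl φ (by simp)) (ih fun ψ hψ => hl ψ (by simp [hψ]))

lemma myPTalpha_puplus [Fintype V] (X : Finset (V → Bool)) : IsPUPlus (myPTalpha X) := by
  have h : IsPUPlus (PTthetaStar X) := by
    apply myPTtensorList_puplus
    intro ψ hψ
    rcases List.mem_map.mp hψ with ⟨s, _, rfl⟩
    exact IsPUPlus.and (myPTdescr_puplus s) IsPUPlus.ne
  exact IsPUPlus.nsor h h

end MyAux

/-- **PU⁺ characterizes the union closed team properties.**  (a) Every PU⁺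
formula defines a union closed team property; (b) every union closed team
property is definable by a PU⁺ formula. -/
theorem puplus_characterizes_union_closed (V : Type) [Fintype V] [Nonempty V] :
    (∀ φ : PTForm V, IsPUPlus φ →
      IsUnionClosed {X : Set (V → Bool) | PTSat X φ}) ∧
    (∀ P : Set (Set (V → Bool)), IsUnionClosed P →
      ∃ φ : PTForm V, IsPUPlus φ ∧
        ∀ Y : Set (V → Bool), PTSat Y φ ↔ Y ∈ P) := by
  classical
  constructor
  · -- part (a)
    intro φ hφ
    induction hφ with
    | pos i =>
      intro 𝒳 h𝒳 _
      show PTSat _ (PTForm.pos i)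
      rintro s ⟨X, hX, hsX⟩
      exact h𝒳 hX s hsX
    | neg i =>
      intro 𝒳 h𝒳 _
      show PTSat _ (PTForm.neg i)
      rintro s ⟨X, hX, hsX⟩
      exact h𝒳 hX s hsX
    | bot =>
      intro 𝒳 h𝒳 _
      show PTSat _ PTForm.bot
      exact Set.sUnion_eq_empty.mpr fun X hX => h𝒳 hX
    | ne =>
      rintro 𝒳 h𝒳 ⟨X, hX⟩
      show (⋃₀ 𝒳) ≠ ∅
      intro h
      exact h𝒳 hX (Set.sUnion_eq_empty.mp h X hX)
    | @and φ ψ hφ' hψ' ihφ ihψ =>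
      intro 𝒳 h𝒳 hne
      exact ⟨ihφ 𝒳 (fun X hX => (h𝒳 hX).1) hne, ihψ 𝒳 (fun X hX => (h𝒳 hX).2) hne⟩
    | @tensor φ ψ hφ' hψ' ihφ ihψ =>
      intro 𝒳 h𝒳 hne
      have h' : ∀ X ∈ 𝒳, ∃ Y Z, X = Y ∪ Z ∧ PTSat Y φ ∧ PTSat Z ψ :=
        fun X hX => h𝒳 hX
      choose! Yf Zf hE hY hZ using h'
      show PTSat _ (PTForm.tensor φ ψ)
      refine ⟨⋃₀ (Yf '' 𝒳), ⋃₀ (Zf '' 𝒳), ?_, ?_, ?_⟩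
      · ext t
        simp only [Set.mem_sUnion, Set.mem_union, Set.mem_image]
        constructor
        · rintro ⟨X, hX, ht⟩
          rw [hE X hX] at ht
          rcases ht with ht | ht
          · exact Or.inl ⟨_, ⟨X, hX, rfl⟩, ht⟩
          · exact Or.inr ⟨_, ⟨X, hX, rfl⟩, ht⟩
        · rintro (⟨_, ⟨X, hX, rfl⟩, ht⟩ | ⟨_, ⟨X, hX, rfl⟩, ht⟩)
          · exact ⟨X, hX, by rw [hE X hX]; exact Or.inl ht⟩
          · exact ⟨X, hX, by rw [hE X hX]; exact Or.inr ht⟩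
      · exact ihφ _ (by rintro _ ⟨X, hX, rfl⟩; exact hY X hX) (hne.image _)
      · exact ihψ _ (by rintro _ ⟨X, hX, rfl⟩; exact hZ X hX) (hne.image _)
    | @nsor φ ψ hφ' hψ' ihφ ihψ =>
      intro 𝒳 h𝒳 hne
      show PTSat _ (PTForm.nsor φ ψ)
      by_cases hall : ∀ X ∈ 𝒳, X = ∅
      · exact Or.inl (Set.sUnion_eq_empty.mpr hall)
      · push_neg at hall
        obtain ⟨X₀, hX₀, hX₀ne⟩ := hall
        set 𝒳' : Set (Set (V → Bool)) := {X | X ∈ 𝒳 ∧ X ≠ ∅} with h𝒳'def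
        have hX₀' : X₀ ∈ 𝒳' := ⟨hX₀, hX₀ne.ne_empty⟩
        have hsub : ⋃₀ 𝒳 = ⋃₀ 𝒳' := by
          ext t
          simp only [Set.mem_sUnion]
          constructor
          · rintro ⟨X, hX, ht⟩
            refine ⟨X, ⟨hX, ?_⟩, ht⟩
            intro h; rw [h] at ht; exact ht
          · rintro ⟨X, ⟨hX, _⟩, ht⟩
            exact ⟨X, hX, ht⟩
        have h' : ∀ X ∈ 𝒳', ∃ Y Z, X = Y ∪ Z ∧ Y.Nonempty ∧ Z.Nonempty ∧
            PTSat Y φ ∧ PTSat Z ψ := by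
          rintro X ⟨hX, hXne⟩
          rcases (h𝒳 hX : PTSat X (PTForm.nsor φ ψ)) with h | h
          · exact absurd h hXne
          · exact h
        choose! Yf Zf hE hYne hZne hY hZ using h'
        right
        refine ⟨⋃₀ (Yf '' 𝒳'), ⋃₀ (Zf '' 𝒳'), ?_, ?_, ?_, ?_, ?_⟩
        · rw [hsub]
          ext t
          simp only [Set.mem_sUnion, Set.mem_union, Set.mem_image]
          constructor
          · rintro ⟨X, hX, ht⟩
            rw [hE X hX] at ht
            rcases ht with ht | ht
            · exact Or.inl ⟨_, ⟨X, hX, rfl⟩, ht⟩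
            · exact Or.inr ⟨_, ⟨X, hX, rfl⟩, ht⟩
          · rintro (⟨_, ⟨X, hX, rfl⟩, ht⟩ | ⟨_, ⟨X, hX, rfl⟩, ht⟩)
            · exact ⟨X, hX, by rw [hE X hX]; exact Or.inl ht⟩
            · exact ⟨X, hX, by rw [hE X hX]; exact Or.inr ht⟩
        · obtain ⟨t, ht⟩ := hYne X₀ hX₀'
          exact ⟨t, _, ⟨X₀, hX₀', rfl⟩, ht⟩
        · obtain ⟨t, ht⟩ := hZne X₀ hX₀'
          exact ⟨t, _, ⟨X₀, hX₀', rfl⟩, ht⟩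
        · exact ihφ _ (by rintro _ ⟨X, hX, rfl⟩; exact hY X hX) ⟨_, ⟨X₀, hX₀', rfl⟩⟩
        · exact ihψ _ (by rintro _ ⟨X, hX, rfl⟩; exact hZ X hX) ⟨_, ⟨X₀, hX₀', rfl⟩⟩
  · -- part (b)
    intro P hP
    set F : Finset (Finset (V → Bool)) :=
      Set.Finite.toFinset (Set.toFinite {X : Finset (V → Bool) | ↑X ∈ P ∧ X.Nonempty})
      with hF
    set φ₀ : PTForm V := PTtensorList (F.toList.map myPTalpha) with hφ₀
    have hmemL : ∀ X : Finset (V → Bool), X ∈ F.toList ↔ ↑X ∈ P ∧ X.Nonempty := by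
      intro X
      rw [Finset.mem_toList, hF, Set.Finite.mem_toFinset]
      exact Iff.rfl
    have hsat : ∀ Y, PTSat Y φ₀ ↔ (Y = ∅ ∨ Y ∈ P) := by
      intro Y
      rw [hφ₀, myTensorAlpha_sat]
      constructor
      · rintro ⟨M, hM, rfl⟩
        cases M with
        | nil => left; simp
        | cons Z M' =>
          right
          have heq : (⋃ X ∈ (Z :: M' : List (Finset (V → Bool))), (↑X : Set (V → Bool))) =
              ⋃₀ ((fun X : Finset (V → Bool) => (↑X : Set (V → Bool))) ''
                {X | X ∈ Z :: M'}) := (Set.sUnion_image _ _).symm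
          rw [heq]
          apply hP
          · rintro _ ⟨X, hX, rfl⟩
            exact ((hmemL X).mp (hM X hX)).1
          · exact ⟨↑Z, ⟨Z, by simp, rfl⟩⟩
      · rintro (rfl | hY)
        · exact ⟨[], by simp, by simp⟩
        · rcases eq_or_ne Y ∅ with rfl | hYne
          · exact ⟨[], by simp, by simp⟩
          · refine ⟨[(Set.toFinite Y).toFinset], ?_, by simp [Set.Finite.coe_toFinset]⟩
            intro X hX
            rw [List.mem_singleton] at hX
            subst hX
            rw [hmemL]
            refine ⟨by rw [Set.Finite.coe_toFinset]; exact hY, ?_⟩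
            rw [Set.Finite.toFinset_nonempty]
            exact Set.nonempty_iff_ne_empty.mpr hYne
    have hPU : IsPUPlus φ₀ := by
      rw [hφ₀]
      apply myPTtensorList_puplus
      intro ψ hψ
      rcases List.mem_map.mp hψ with ⟨X, _, rfl⟩
      exact myPTalpha_puplus X
    by_cases hem : (∅ : Set (V → Bool)) ∈ P
    · refine ⟨φ₀, hPU, fun Y => ?_⟩
      rw [hsat]
      constructor
      · rintro (rfl | h)
        · exact hem
        · exact h
      · exact Or.inr
    · refine ⟨.and φ₀ .ne, IsPUPlus.and hPU IsPUPlus.ne, fun Y => ?_⟩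
      show PTSat Y φ₀ ∧ Y ≠ ∅ ↔ _
      rw [hsat]
      constructor
      · rintro ⟨rfl | h, hne⟩
        · exact absurd rfl hne
        · exact h
      · intro h
        refine ⟨Or.inr h, ?_⟩
        rintro rfl
        exact hem h
end
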